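/- Local trace criterion: let M* be a generalized mesh, s = (S,γ) a generalized d-subfacet with S ∈ σ_d(∂M*), and suppose the projected star st_∂ s = {(F,k) ∈ ∂M* : S ⊂ F and k ∈ γ} is connected through S in the boundary adjacency graph. Then t = (S, st_∂ s) is a generalized d-subfacet of ∂M*, and the Whitney forms satisfy ω_t = ± Tr ω_s, with sign + exactly when the chosen orientations of S in M* and in ∂M* agree. -/

import Mathlib

/-- A generalized mesh: a type of elements, a realization function assigning to each element
a simplex (a finite set of vertices), and a neighbor function encoding the adjacency graph
between split facets (each split facet `(F, k)` has at most one neighbor). -/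
structure GenMesh (V : Type*) (n : ℕ) where
  Elem : Type*
  real : Elem → Finset V
  nbr : Elem → Finset V → Option Elem

namespace GenMesh

variable {V : Type*} {n : ℕ}

/-- The axioms of an `n`-dimensional generalized mesh: finitely many elements, each realized
as an `n`-simplex; the adjacency graph is symmetric, two adjacent split facets share the same
facet, belong to distinct elements, and each split facet has at most one neighbor. -/
def IsValid (M : GenMesh V n) : Prop :=
  Finite M.Elem ∧ (∀ k, (M.real k).card = n + 1) ∧
    ∀ k F k', M.nbr k F = some k' →
      k' ≠ k ∧ M.nbr k' F = some k ∧ F ⊆ M.real k ∧ F ⊆ M.real k' ∧ F.card = n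

end GenMesh
/-- A chain of distinct elements of `M` circling around the `(n-2)`-subsimplex `S`, starting
at the boundary split facet `(F0, k0)` and ending at another boundary split facet. -/
structure ChainAround {V : Type*} {n : ℕ} (M : GenMesh V n) (k0 : M.Elem) (F0 S : Finset V) where
  Q : ℕ
  hQ : 0 < Q
  ks : Fin Q → M.Elem
  Fs : Fin (Q + 1) → Finset V
  ks_inj : Function.Injective ks
  Fs_inj : Function.Injective Fs
  first_k : ks ⟨0, hQ⟩ = k0
  first_F : Fs 0 = F0
  sub_S : ∀ i, S ⊆ Fs i
  card_F : ∀ i, (Fs i).card = n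
  mem_left : ∀ q : Fin Q, Fs q.castSucc ⊆ M.real (ks q)
  mem_right : ∀ q : Fin Q, Fs q.succ ⊆ M.real (ks q)
  adj : ∀ (q : Fin Q) (h : (q : ℕ) + 1 < Q),
    M.nbr (ks q) (Fs q.succ) = some (ks ⟨(q : ℕ) + 1, h⟩)
  first_bd : M.nbr k0 F0 = none
  last_bd : M.nbr (ks ⟨Q - 1, Nat.sub_lt hQ Nat.one_pos⟩) (Fs (Fin.last Q)) = none
open Classical
/-- The generalized boundary of a generalized mesh: its elements are the boundary split
facets `(k, F)` of `M`, realized as `F`, and two boundary split facets are adjacent through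
`S` when they are the two ends of a chain of elements of `M` circling around `S`. -/

noncomputable def GenMesh.boundary {V : Type*} {n : ℕ} (M : GenMesh V (n + 1)) :
    GenMesh V n where
  Elem := {fk : M.Elem × Finset V //
    fk.2 ⊆ M.real fk.1 ∧ fk.2.card = n + 1 ∧ M.nbr fk.1 fk.2 = none}
  real := fun fk => fk.1.2
  nbr := fun fk S =>
    if h : Nonempty (ChainAround M fk.1.1 fk.1.2 S) then
      some ⟨(h.some.ks ⟨h.some.Q - 1, Nat.sub_lt h.some.hQ Nat.one_pos⟩,
             h.some.Fs (Fin.last h.some.Q)), by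
        constructor
        · have hmr := h.some.mem_right ⟨h.some.Q - 1, Nat.sub_lt h.some.hQ Nat.one_pos⟩
          have hsucc : (⟨h.some.Q - 1, Nat.sub_lt h.some.hQ Nat.one_pos⟩ : Fin h.some.Q).succ
              = Fin.last h.some.Q := by
            apply Fin.ext
            simp only [Fin.val_succ, Fin.val_last]
            have := h.some.hQ
            omega
          rwa [hsucc] at hmr
        · exact ⟨h.some.card_F _, h.some.last_bd⟩⟩
    else none
/-- `k` and `k'` lie in the same connected component of the graph `G(S)` on the generalized
star of `S`: they are linked by a chain of elements, consecutive ones being adjacent through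
a facet containing `S`. -/
def inSameComp {V : Type*} {n : ℕ} (M : GenMesh V n) (S : Set V) (k k' : M.Elem) : Prop :=
  Relation.ReflTransGen
    (fun a b => ∃ G : Finset V, S ⊆ (G : Set V) ∧
      (M.nbr a G = some b ∨ M.nbr b G = some a)) k k'
open Classical in
/-- Evaluation of the Whitney `d`-form associated to the generalized `d`-subfacet with vertex
ordering `Vs` and component `γ`: on an element `k ∈ γ` it is the alternating sum
`∑_j (-1)^j λ_{V_j} dλ_{V_0} ∧ … ∧ d̂λ_{V_j} ∧ … ∧ dλ_{V_d}`, evaluated at the point `x` on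
the tuple of vectors `v`; on elements outside `γ` it vanishes. -/
noncomputable def whitneyEval {m n : ℕ} (M : GenMesh (Fin m → ℝ) n)
    (lam : M.Elem → (Fin m → ℝ) → ((Fin m → ℝ) →ᵃ[ℝ] ℝ)) {d : ℕ}
    (Vs : Fin (d + 1) → (Fin m → ℝ)) (γ : Set M.Elem) (k : M.Elem) (x : Fin m → ℝ)
    (v : Fin d → (Fin m → ℝ)) : ℝ :=
  if k ∈ γ then
    ∑ j : Fin (d + 1), (-1 : ℝ) ^ (j : ℕ) * lam k (Vs j) x *
      Matrix.det (Matrix.of fun a b : Fin d => (lam k (Vs (j.succAbove a))).linear (v b))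
  else 0

/-- The space `Λ^d(M)` of Whitney `d`-forms on a generalized mesh: the span of the Whitney
forms associated to the generalized `d`-subfacets of `M`. -/
noncomputable def whitneyForms {m n : ℕ} (M : GenMesh (Fin m → ℝ) n)
    (lam : M.Elem → (Fin m → ℝ) → ((Fin m → ℝ) →ᵃ[ℝ] ℝ)) (d : ℕ) :
    Submodule ℝ (M.Elem → (Fin m → ℝ) → (Fin d → (Fin m → ℝ)) → ℝ) :=
  Submodule.span ℝ
    {w | ∃ (Vs : Fin (d + 1) → (Fin m → ℝ)) (k₀ : M.Elem), Function.Injective Vs ∧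
      (∀ j, Vs j ∈ M.real k₀) ∧
      w = fun k x v => whitneyEval M lam Vs {kk | inSameComp M (Set.range Vs) k₀ kk} k x v}

open Classical in
/-- `lam k v` is the barycentric coordinate function of the simplex attached to `k`
associated with its vertex `v`. -/
def IsBary {m n : ℕ} (M : GenMesh (Fin m → ℝ) n)
    (lam : M.Elem → (Fin m → ℝ) → ((Fin m → ℝ) →ᵃ[ℝ] ℝ)) : Prop :=
  ∀ k, ∀ v ∈ M.real k, ∀ w ∈ M.real k, lam k v w = if v = w then (1 : ℝ) else 0

/-- Every element of the generalized mesh is realized as a non-degenerate simplex. -/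
def GoodSimplices {m n : ℕ} (M : GenMesh (Fin m → ℝ) n) : Prop :=
  ∀ k, AffineIndependent ℝ (fun v : {x // x ∈ M.real k} => (v : Fin m → ℝ))

section Aux

/-- Two affine maps agreeing on a set agree on its convex hull, and their linear parts
agree on its vector span. -/
lemma affine_agree {m : ℕ} {g h : (Fin m → ℝ) →ᵃ[ℝ] ℝ} {s : Set (Fin m → ℝ)}
    (H : ∀ w ∈ s, g w = h w) :
    (∀ x ∈ convexHull ℝ s, g x = h x) ∧
      (∀ u ∈ vectorSpan ℝ s, g.linear u = h.linear u) := by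
  constructor
  · intro x hx
    have hc : Convex ℝ {x : Fin m → ℝ | g x = h x} := by
      have he : {x : Fin m → ℝ | g x = h x} = (g - h) ⁻¹' {0} := by
        ext x; simp [sub_eq_zero]
      rw [he]
      exact (convex_singleton (0 : ℝ)).affine_preimage _
    exact convexHull_min (fun w hw => H w hw) hc hx
  · intro u hu
    have hker : vectorSpan ℝ s ≤ LinearMap.ker (g.linear - h.linear) := by
      rw [vectorSpan_def, Submodule.span_le]
      intro u hu
      rw [Set.mem_vsub] at hu
      obtain ⟨a, ha, b, hb, rfl⟩ := hu
      simp only [SetLike.mem_coe, LinearMap.mem_ker, LinearMap.sub_apply,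
        AffineMap.linearMap_vsub, H a ha, H b hb, sub_self]
    have := hker hu
    rw [LinearMap.mem_ker, LinearMap.sub_apply, sub_eq_zero] at this
    exact this

lemma inSameComp_symm {V : Type*} {n : ℕ} {M : GenMesh V n} {S : Set V} {a b : M.Elem}
    (h : inSameComp M S a b) : inSameComp M S b a := by
  refine (@Relation.ReflTransGen.stdSymm _ _ ⟨?_⟩).symm _ _ h
  rintro x y ⟨G, h1, h2⟩
  exact ⟨G, h1, h2.symm⟩

lemma inSameComp_real {V : Type*} {n : ℕ} (M : GenMesh V n) (hM : M.IsValid) (S : Set V)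
    {k₀ k : M.Elem} (h0 : S ⊆ (M.real k₀ : Set V)) (h : inSameComp M S k₀ k) :
    S ⊆ (M.real k : Set V) := by
  induction h with
  | refl => exact h0
  | tail _ hr ih =>
    obtain ⟨G, hG, hor⟩ := hr
    rcases hor with h1 | h1
    · exact hG.trans (Finset.coe_subset.2 (hM.2.2 _ _ _ h1).2.2.2.1)
    · exact hG.trans (Finset.coe_subset.2 (hM.2.2 _ _ _ h1).2.2.1)

lemma chain_inSameComp {V : Type*} {n : ℕ} {M : GenMesh V n} {k0 : M.Elem} {F0 S : Finset V}
    (c : ChainAround M k0 F0 S) (T : Set V) (hT : T ⊆ (S : Set V)) :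
    ∀ q : Fin c.Q, inSameComp M T k0 (c.ks q) := by
  suffices H : ∀ i (hi : i < c.Q), inSameComp M T k0 (c.ks ⟨i, hi⟩) from
    fun q => H q.1 q.2
  intro i
  induction i with
  | zero =>
    intro hi
    have : (⟨0, hi⟩ : Fin c.Q) = ⟨0, c.hQ⟩ := rfl
    rw [this, c.first_k]
    exact Relation.ReflTransGen.refl
  | succ i ih =>
    intro hi
    have hi' : i < c.Q := Nat.lt_of_succ_lt hi
    refine (ih hi').tail ?_
    refine ⟨c.Fs (⟨i, hi'⟩ : Fin c.Q).succ, ?_, Or.inl ?_⟩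
    · exact hT.trans (Finset.coe_subset.2 (c.sub_S _))
    · exact c.adj ⟨i, hi'⟩ hi

lemma boundary_nbr_inSameComp {V : Type*} {n : ℕ} {M : GenMesh V (n + 1)}
    {a b : M.boundary.Elem} {G : Finset V} {T : Set V} (hT : T ⊆ (G : Set V))
    (hb : M.boundary.nbr a G = some b) : inSameComp M T a.1.1 b.1.1 := by
  classical
  unfold GenMesh.boundary at hb
  simp only at hb
  by_cases h : Nonempty (ChainAround M a.1.1 a.1.2 G)
  · rw [dif_pos h] at hb
    have hb' := Option.some.inj hb
    have hbb : b.1.1 = h.some.ks ⟨h.some.Q - 1, Nat.sub_lt h.some.hQ Nat.one_pos⟩ := by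
      rw [← hb']
    rw [hbb]
    exact chain_inSameComp h.some T hT _
  · rw [dif_neg h] at hb
    exact absurd hb (by simp)

open Classical in
lemma whitney_det {m n d : ℕ} (M : GenMesh (Fin m → ℝ) n)
    (lam : M.Elem → (Fin m → ℝ) → ((Fin m → ℝ) →ᵃ[ℝ] ℝ))
    (Vs : Fin (d + 1) → (Fin m → ℝ)) (γ : Set M.Elem) (k : M.Elem) (x : Fin m → ℝ)
    (v : Fin d → (Fin m → ℝ)) (hk : k ∈ γ) :
    whitneyEval M lam Vs γ k x v =
      Matrix.det (Matrix.of fun j i : Fin (d + 1) =>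
        Fin.cons (lam k (Vs j) x) (fun b : Fin d => (lam k (Vs j)).linear (v b)) i) := by
  unfold whitneyEval
  rw [if_pos hk, Matrix.det_succ_column_zero]
  refine Finset.sum_congr rfl fun j _ => ?_
  have hsub : ((Matrix.of fun j' i : Fin (d + 1) =>
        Fin.cons (lam k (Vs j') x) (fun b : Fin d => (lam k (Vs j')).linear (v b)) i)).submatrix
        j.succAbove Fin.succ =
      Matrix.of fun a b : Fin d => (lam k (Vs (j.succAbove a))).linear (v b) := by
    ext a b
    simp [Fin.cons_succ]
  rw [hsub, Matrix.of_apply, Fin.cons_zero]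

open Classical in
lemma whitney_zero {m n d : ℕ} (M : GenMesh (Fin m → ℝ) n)
    (lam : M.Elem → (Fin m → ℝ) → ((Fin m → ℝ) →ᵃ[ℝ] ℝ))
    (Vs : Fin (d + 1) → (Fin m → ℝ)) (γ : Set M.Elem) (k : M.Elem) (x : Fin m → ℝ)
    (v : Fin d → (Fin m → ℝ)) (j₀ : Fin (d + 1))
    (hx0 : lam k (Vs j₀) x = 0) (hv0 : ∀ b, (lam k (Vs j₀)).linear (v b) = 0) :
    whitneyEval M lam Vs γ k x v = 0 := by
  unfold whitneyEval
  split
  · refine Finset.sum_eq_zero fun j _ => ?_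
    by_cases hj : j = j₀
    · subst hj; rw [hx0]; ring
    · obtain ⟨a, ha⟩ := Fin.exists_succAbove_eq (Ne.symm hj)
      rw [Matrix.det_eq_zero_of_row_eq_zero a (fun b => by simp [ha, hv0])]
      ring
  · rfl

end Aux

/-- local trace criterion. Let `M` be a generalized mesh, `s = (S, γ)` a
generalized `d`-subfacet of `M` with `S ∈ σ_d(∂M)` (ordering `Vs`), and suppose the
projected star `st_∂ s = {(F,k) ∈ ∂M : S ⊆ F, k ∈ γ}` is nonempty and connected through `S`
in the boundary adjacency graph.  Then `t = (S, st_∂ s)` is a generalized `d`-subfacet of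
`∂M` (i.e. `st_∂ s` is a connected component of the graph on the star of `S` in `∂M`), and
the Whitney forms satisfy `ω_t = ± Tr ω_s`, with sign `+` exactly when the chosen
orientations `Ws` (in `∂M`) and `Vs` (in `M`) of `S` agree. -/
theorem stmt15 {m n d : ℕ} (M : GenMesh (Fin m → ℝ) (n + 1)) (hM : M.IsValid)
    (hgood : GoodSimplices M) (hgoodB : GoodSimplices M.boundary)
    (lam : M.Elem → (Fin m → ℝ) → ((Fin m → ℝ) →ᵃ[ℝ] ℝ)) (hlam : IsBary M lam)
    (lam' : M.boundary.Elem → (Fin m → ℝ) → ((Fin m → ℝ) →ᵃ[ℝ] ℝ))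
    (hlam' : IsBary M.boundary lam')
    (Vs : Fin (d + 1) → (Fin m → ℝ)) (hVs : Function.Injective Vs)
    (k₀ : M.Elem) (hk₀ : ∀ j, Vs j ∈ M.real k₀)
    (γ : Set M.Elem) (hγ : γ = {kk | inSameComp M (Set.range Vs) k₀ kk})
    (stps : Set M.boundary.Elem)
    (hstps : stps = {f | Set.range Vs ⊆ (f.1.2 : Set (Fin m → ℝ)) ∧ f.1.1 ∈ γ})
    (hne : stps.Nonempty)
    (hconn : ∀ f ∈ stps, ∀ f' ∈ stps,
      Relation.ReflTransGen (fun a b => a ∈ stps ∧ b ∈ stps ∧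
        ∃ G : Finset (Fin m → ℝ), Set.range Vs ⊆ (G : Set (Fin m → ℝ)) ∧
          (M.boundary.nbr a G = some b ∨ M.boundary.nbr b G = some a)) f f')
    (Ws : Fin (d + 1) → (Fin m → ℝ)) (hWs : Function.Injective Ws)
    (hWsVs : Set.range Ws = Set.range Vs) :
    (∀ f ∈ stps, ∀ f' : M.boundary.Elem,
        Set.range Vs ⊆ (f'.1.2 : Set (Fin m → ℝ)) →
          (inSameComp M.boundary (Set.range Vs) f f' ↔ f' ∈ stps)) ∧
    ((∃ σ : Equiv.Perm (Fin (d + 1)), Equiv.Perm.sign σ = 1 ∧ Ws = Vs ∘ σ) →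
      ∀ f : M.boundary.Elem, ∀ x ∈ convexHull ℝ (f.1.2 : Set (Fin m → ℝ)),
        ∀ v : Fin d → (Fin m → ℝ),
          (∀ i, v i ∈ vectorSpan ℝ (f.1.2 : Set (Fin m → ℝ))) →
            whitneyEval M.boundary lam' Ws stps f x v
              = whitneyEval M lam Vs γ f.1.1 x v) ∧
    ((∃ σ : Equiv.Perm (Fin (d + 1)), Equiv.Perm.sign σ = -1 ∧ Ws = Vs ∘ σ) →
      ∀ f : M.boundary.Elem, ∀ x ∈ convexHull ℝ (f.1.2 : Set (Fin m → ℝ)),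
        ∀ v : Fin d → (Fin m → ℝ),
          (∀ i, v i ∈ vectorSpan ℝ (f.1.2 : Set (Fin m → ℝ))) →
            whitneyEval M.boundary lam' Ws stps f x v
              = - whitneyEval M lam Vs γ f.1.1 x v) := by
  subst hγ hstps
  simp only [Set.mem_setOf_eq]
  set rV : Set (Fin m → ℝ) := Set.range Vs with hrV
  have hreal0 : rV ⊆ (M.real k₀ : Set (Fin m → ℝ)) := by
    rintro _ ⟨j, rfl⟩; exact hk₀ j
  -- elements in γ contain all the vertices
  have hγreal : ∀ k : M.Elem, inSameComp M rV k₀ k → rV ⊆ (M.real k : Set (Fin m → ℝ)) :=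
    fun k hk => inSameComp_real M hM rV hreal0 hk
  refine ⟨?_, ?_, ?_⟩
  · -- part 1
    intro f hf f' hsub'
    constructor
    · intro h
      refine ⟨hsub', ?_⟩
      have hfγ : inSameComp M rV k₀ f.1.1 := hf.2
      have key : ∀ g : M.boundary.Elem, inSameComp M.boundary rV f g →
          inSameComp M rV f.1.1 g.1.1 := by
        intro g hg
        induction hg with
        | refl => exact Relation.ReflTransGen.refl
        | tail _ hr ih =>
          obtain ⟨G, hG, hor⟩ := hr
          rcases hor with h1 | h1
          · exact ih.trans (boundary_nbr_inSameComp hG h1)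
          · exact ih.trans (inSameComp_symm (boundary_nbr_inSameComp hG h1))
      exact hfγ.trans (key f' h)
    · intro h
      exact Relation.ReflTransGen.mono (fun a b hab => hab.2.2) _ _ (hconn f hf f' h)
  all_goals {
  rintro ⟨σ, hσ, hW⟩ f x hx v hv
  have hreal : (f.1.2 : Set (Fin m → ℝ)) ⊆ (M.real f.1.1 : Set (Fin m → ℝ)) :=
    fun w hw => f.2.1 hw
  by_cases hf : f ∈ {f : M.boundary.Elem | rV ⊆ (f.1.2 : Set (Fin m → ℝ)) ∧
      inSameComp M rV k₀ f.1.1}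
  · -- on the star: trace equality up to sign
    have hfγ : inSameComp M rV k₀ f.1.1 := hf.2
    have hsub : rV ⊆ (f.1.2 : Set (Fin m → ℝ)) := hf.1
    have agree : ∀ u ∈ rV, lam' f u x = lam f.1.1 u x ∧
        ∀ b, (lam' f u).linear (v b) = (lam f.1.1 u).linear (v b) := by
      intro u hu
      have h1 : ∀ w ∈ (f.1.2 : Set (Fin m → ℝ)), lam' f u w = lam f.1.1 u w := by
        intro w hw
        rw [hlam' f u (hsub hu) w hw,
          hlam f.1.1 u (hreal (hsub hu)) w (hreal hw)]
      obtain ⟨hA, hB⟩ := affine_agree h1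
      exact ⟨hA x hx, fun b => hB _ (hv b)⟩
    rw [whitney_det M.boundary lam' Ws _ f x v hf,
      whitney_det M lam Vs {kk : M.Elem | inSameComp M rV k₀ kk} f.1.1 x v hfγ]
    have hBA : (Matrix.of fun j i : Fin (d + 1) =>
          Fin.cons (lam' f (Ws j) x) (fun b : Fin d => (lam' f (Ws j)).linear (v b)) i)
        = (Matrix.of fun j i : Fin (d + 1) =>
            Fin.cons (lam f.1.1 (Vs j) x)
              (fun b : Fin d => (lam f.1.1 (Vs j)).linear (v b)) i).submatrix σ id := by
      ext j i
      have hu : Ws j ∈ rV := hWsVs ▸ Set.mem_range_self j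
      obtain ⟨hA, hB⟩ := agree _ hu
      have hWj : Ws j = Vs (σ j) := by rw [hW]; rfl
      refine Fin.cases ?_ ?_ i
      · simpa [hWj] using hA
      · intro b
        simpa [hWj] using hB b
    rw [hBA, Matrix.det_permute, hσ]
    norm_num
  · -- off the star: both sides vanish
    have hL : whitneyEval M.boundary lam' Ws
        {f : M.boundary.Elem | rV ⊆ (f.1.2 : Set (Fin m → ℝ)) ∧
          inSameComp M rV k₀ f.1.1} f x v = 0 := by
      unfold whitneyEval
      rw [if_neg hf]
    by_cases hγf : inSameComp M rV k₀ f.1.1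
    · have hns : ¬ rV ⊆ (f.1.2 : Set (Fin m → ℝ)) := fun hs => hf ⟨hs, hγf⟩
      obtain ⟨u, hu, hunot⟩ := Set.not_subset.1 hns
      obtain ⟨j₀, rfl⟩ := hu
      have hj0real : Vs j₀ ∈ M.real f.1.1 := hγreal _ hγf ⟨j₀, rfl⟩
      have hvanish : ∀ w ∈ (f.1.2 : Set (Fin m → ℝ)),
          lam f.1.1 (Vs j₀) w = (0 : (Fin m → ℝ) →ᵃ[ℝ] ℝ) w := by
        intro w hw
        rw [hlam f.1.1 _ hj0real w (hreal hw),
          if_neg (show ¬ Vs j₀ = w by rintro rfl; exact hunot hw)]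
        simp
      obtain ⟨hA, hB⟩ := affine_agree hvanish
      rw [hL, whitney_zero M lam Vs {kk : M.Elem | inSameComp M rV k₀ kk} f.1.1 x v j₀
        (by simpa using hA x hx) (fun b => by simpa using hB _ (hv b))]
      try ring
    · have hR : whitneyEval M lam Vs {kk : M.Elem | inSameComp M rV k₀ kk} f.1.1 x v = 0 := by
        unfold whitneyEval
        rw [if_neg (show ¬ f.1.1 ∈ {kk : M.Elem | inSameComp M rV k₀ kk} from hγf)]
      rw [hL, hR]
      try ring
  }
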